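/- Let A, B be finite nonempty sets of integers with diam B ≤ diam A ≤ |A| + |B| - 3 and |A+B| ≤ |A| + 2|B| - 3 - δ(A,B), where δ(A,B) = 1 if some translate of A is contained in B and 0 otherwise. Then A + B contains an arithmetic progression with difference 1 (i.e., an interval of consecutive integers) of length |A| + |B| - 1. -/
import Mathlib


open scoped Pointwise
open scoped Classical
open Finset


private lemma card_Icc_int (x y : ℤ) (h : x ≤ y + 1) : ((Finset.Icc x y).card : ℤ) = y - x + 1 := by
  rw [Int.card_Icc]; omega

private lemma pigeon (X Y W : Finset ℤ) (hX : X ⊆ W) (hY : Y ⊆ W)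
    (h : (W.card : ℤ) < X.card + Y.card) : (X ∩ Y).Nonempty := by
  rw [← Finset.card_pos]
  have h1 := Finset.card_union_add_card_inter X Y
  have h2 : (X ∪ Y).card ≤ W.card := Finset.card_le_card (Finset.union_subset hX hY)
  have : (0:ℤ) < ((X ∩ Y).card : ℤ) := by
    have h1' : ((X ∪ Y).card : ℤ) + ((X ∩ Y).card : ℤ) = (X.card : ℤ) + Y.card := by
      exact_mod_cast h1
    have h2' : ((X ∪ Y).card : ℤ) ≤ (W.card : ℤ) := by exact_mod_cast h2
    omega
  exact_mod_cast this

noncomputable def pre (X : Finset ℤ) (x : ℤ) : ℤ := ((X.filter (fun t => t ≤ x)).card : ℤ)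
noncomputable def suf (X : Finset ℤ) (x : ℤ) : ℤ := ((X.filter (fun t => x ≤ t)).card : ℤ)

lemma pre_nonneg (X : Finset ℤ) (x : ℤ) : 0 ≤ pre X x := Int.ofNat_nonneg _

lemma suf_nonneg (X : Finset ℤ) (x : ℤ) : 0 ≤ suf X x := Int.ofNat_nonneg _

lemma pre_add_suf (X : Finset ℤ) (x : ℤ) : pre X x + suf X (x+1) = X.card := by
  unfold pre suf
  have heq : X.filter (fun t => x + 1 ≤ t) = X.filter (fun t => ¬ (t ≤ x)) := by
    apply Finset.filter_congr; intro t _; constructor <;> intro h <;> omega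
  rw [heq]
  have h2 := Finset.card_filter_add_card_filter_not (s := X) (p := fun t => t ≤ x)
  exact_mod_cast h2

lemma pre_mono (X : Finset ℤ) {x y : ℤ} (h : x ≤ y) : pre X x ≤ pre X y := by
  unfold pre
  have : X.filter (fun t => t ≤ x) ⊆ X.filter (fun t => t ≤ y) := by
    intro t ht; simp only [Finset.mem_filter] at ht ⊢; exact ⟨ht.1, le_trans ht.2 h⟩
  exact_mod_cast Finset.card_le_card this

lemma suf_anti (X : Finset ℤ) {x y : ℤ} (h : x ≤ y) : suf X y ≤ suf X x := by
  unfold suf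
  have : X.filter (fun t => y ≤ t) ⊆ X.filter (fun t => x ≤ t) := by
    intro t ht; simp only [Finset.mem_filter] at ht ⊢; exact ⟨ht.1, le_trans h ht.2⟩
  exact_mod_cast Finset.card_le_card this

lemma pre_le (X : Finset ℤ) (x : ℤ) (h0 : ∀ t ∈ X, 0 ≤ t) (hx : -1 ≤ x) : pre X x ≤ x + 1 := by
  unfold pre
  have hsub : X.filter (fun t => t ≤ x) ⊆ Finset.Icc 0 x := by
    intro t ht; simp only [Finset.mem_filter] at ht; exact Finset.mem_Icc.2 ⟨h0 t ht.1, ht.2⟩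
  calc ((X.filter (fun t => t ≤ x)).card : ℤ) ≤ ((Finset.Icc 0 x).card : ℤ) := by
        exact_mod_cast Finset.card_le_card hsub
    _ = x - 0 + 1 := card_Icc_int 0 x (by omega)
    _ = x + 1 := by ring

lemma suf_le (X : Finset ℤ) (x l : ℤ) (hl : ∀ t ∈ X, t ≤ l) (hx : x ≤ l + 1) : suf X x ≤ l - x + 1 := by
  unfold suf
  have hsub : X.filter (fun t => x ≤ t) ⊆ Finset.Icc x l := by
    intro t ht; simp only [Finset.mem_filter] at ht; exact Finset.mem_Icc.2 ⟨ht.2, hl t ht.1⟩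
  calc ((X.filter (fun t => x ≤ t)).card : ℤ) ≤ ((Finset.Icc x l).card : ℤ) := by
        exact_mod_cast Finset.card_le_card hsub
    _ = l - x + 1 := card_Icc_int x l hx

lemma pre_all (X : Finset ℤ) (x : ℤ) (h : ∀ t ∈ X, t ≤ x) : pre X x = X.card := by
  unfold pre
  rw [Finset.filter_true_of_mem h]

lemma pre_step (X : Finset ℤ) (x : ℤ) :
    pre X x = pre X (x-1) + (if x ∈ X then 1 else 0) := by
  unfold pre
  have hsplit : X.filter (fun t => t ≤ x) = X.filter (fun t => t ≤ x - 1) ∪ X.filter (fun t => t = x) := by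
    rw [← Finset.filter_or]
    apply Finset.filter_congr; intro t _
    constructor <;> intro h
    · rcases eq_or_lt_of_le h with h' | h'
      · exact Or.inr h'
      · exact Or.inl (by omega)
    · rcases h with h | h <;> omega
  have hdisj : Disjoint (X.filter (fun t => t ≤ x - 1)) (X.filter (fun t => t = x)) := by
    rw [Finset.disjoint_left]
    intro t ht1 ht2
    simp only [Finset.mem_filter] at ht1 ht2
    omega
  rw [hsplit, Finset.card_union_of_disjoint hdisj]
  have heq2 : X.filter (fun t => t = x) = if x ∈ X then {x} else ∅ := by
    split_ifs with h
    · ext t; simp only [Finset.mem_filter, Finset.mem_singleton]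
      constructor
      · rintro ⟨_, rfl⟩; rfl
      · rintro rfl; exact ⟨h, rfl⟩
    · ext t; simp only [Finset.mem_filter, Finset.notMem_empty, iff_false, not_and]
      rintro ht rfl; exact h ht
  rw [heq2]
  split_ifs <;> simp

lemma suf_split (X : Finset ℤ) {x y : ℤ} (h : x ≤ y) : suf X x ≤ (y - x) + suf X y := by
  unfold suf
  have hsplit : X.filter (fun t => x ≤ t) ⊆ (X.filter (fun t => x ≤ t ∧ t ≤ y - 1)) ∪ X.filter (fun t => y ≤ t) := by
    intro t ht
    simp only [Finset.mem_filter, Finset.mem_union] at ht ⊢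
    by_cases hy : y ≤ t
    · exact Or.inr ⟨ht.1, hy⟩
    · exact Or.inl ⟨ht.1, ht.2, by omega⟩
  have h1 : ((X.filter (fun t => x ≤ t ∧ t ≤ y - 1)).card : ℤ) ≤ y - x := by
    have hsub : X.filter (fun t => x ≤ t ∧ t ≤ y - 1) ⊆ Finset.Icc x (y-1) := by
      intro t ht; simp only [Finset.mem_filter] at ht; exact Finset.mem_Icc.2 ⟨ht.2.1, ht.2.2⟩
    calc ((X.filter (fun t => x ≤ t ∧ t ≤ y - 1)).card : ℤ) ≤ ((Finset.Icc x (y-1)).card : ℤ) := by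
          exact_mod_cast Finset.card_le_card hsub
      _ = y - 1 - x + 1 := card_Icc_int x (y-1) (by omega)
      _ = y - x := by ring
  have h2 : ((X.filter (fun t => x ≤ t)).card : ℤ) ≤ ((X.filter (fun t => x ≤ t ∧ t ≤ y - 1)).card : ℤ) + ((X.filter (fun t => y ≤ t)).card : ℤ) := by
    calc ((X.filter (fun t => x ≤ t)).card : ℤ) ≤ (((X.filter (fun t => x ≤ t ∧ t ≤ y - 1)) ∪ X.filter (fun t => y ≤ t)).card : ℤ) := by
          exact_mod_cast Finset.card_le_card hsplit
      _ ≤ _ := by exact_mod_cast Finset.card_union_le _ _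
  omega

lemma memS_lower (A B : Finset ℤ) (hposA : ∀ t ∈ A, (0:ℤ) ≤ t) (hposB : ∀ t ∈ B, (0:ℤ) ≤ t)
    (c : ℤ) (hc : 0 ≤ c) (hF : c + 2 ≤ pre A c + pre B c) : c ∈ A + B := by
  have hinj : Function.Injective (fun t : ℤ => c - t) := fun x y h => by simpa using h
  set X := A.filter (fun t => t ≤ c) with hX
  set Y := (B.filter (fun t => t ≤ c)).image (fun t => c - t) with hY
  have hYcard : (Y.card : ℤ) = pre B c := by
    rw [hY, Finset.card_image_of_injective _ hinj]; rfl
  have hXW : X ⊆ Finset.Icc 0 c := by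
    intro t ht; rw [hX, Finset.mem_filter] at ht; exact Finset.mem_Icc.2 ⟨hposA t ht.1, ht.2⟩
  have hYW : Y ⊆ Finset.Icc 0 c := by
    intro z hz; rw [hY, Finset.mem_image] at hz
    obtain ⟨t, ht, rfl⟩ := hz
    rw [Finset.mem_filter] at ht
    exact Finset.mem_Icc.2 ⟨by have := ht.2; omega, by have := hposB t ht.1; omega⟩
  have hcard : ((Finset.Icc (0:ℤ) c).card : ℤ) < X.card + Y.card := by
    rw [card_Icc_int 0 c (by omega), hYcard]
    have : (X.card : ℤ) = pre A c := rfl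
    rw [this]; omega
  obtain ⟨z, hz⟩ := pigeon X Y _ hXW hYW hcard
  rw [Finset.mem_inter] at hz
  obtain ⟨hz1, hz2⟩ := hz
  rw [hX, Finset.mem_filter] at hz1
  rw [hY, Finset.mem_image] at hz2
  obtain ⟨t, ht, htz⟩ := hz2
  rw [Finset.mem_filter] at ht
  rw [Finset.mem_add]
  exact ⟨z, hz1.1, t, ht.1, by omega⟩

lemma memS_upper (A B : Finset ℤ) (lA lB : ℤ)
    (hlAub : ∀ t ∈ A, t ≤ lA) (hlBub : ∀ t ∈ B, t ≤ lB)
    (c : ℤ) (hc : c ≤ lB)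
    (hF : lB - c + 2 ≤ suf A (c + (lA - lB)) + suf B c) : c + lA ∈ A + B := by
  have hinj : Function.Injective (fun t : ℤ => c + lA - t) := fun x y h => by simpa using h
  set g := lA - lB with hg
  set X := A.filter (fun t => c + g ≤ t) with hX
  set Y := (B.filter (fun t => c ≤ t)).image (fun t => c + lA - t) with hY
  have hYcard : (Y.card : ℤ) = suf B c := by
    rw [hY, Finset.card_image_of_injective _ hinj]; rfl
  have hXW : X ⊆ Finset.Icc (c+g) lA := by
    intro t ht; rw [hX, Finset.mem_filter] at ht; exact Finset.mem_Icc.2 ⟨ht.2, hlAub t ht.1⟩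
  have hYW : Y ⊆ Finset.Icc (c+g) lA := by
    intro z hz; rw [hY, Finset.mem_image] at hz
    obtain ⟨t, ht, rfl⟩ := hz
    rw [Finset.mem_filter] at ht
    have h1 := hlBub t ht.1
    exact Finset.mem_Icc.2 ⟨by omega, by have := ht.2; omega⟩
  have hcard : ((Finset.Icc (c+g) lA).card : ℤ) < X.card + Y.card := by
    rw [card_Icc_int (c+g) lA (by omega), hYcard]
    have : (X.card : ℤ) = suf A (c + g) := rfl
    rw [this]; omega
  obtain ⟨z, hz⟩ := pigeon X Y _ hXW hYW hcard
  rw [Finset.mem_inter] at hz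
  obtain ⟨hz1, hz2⟩ := hz
  rw [hX, Finset.mem_filter] at hz1
  rw [hY, Finset.mem_image] at hz2
  obtain ⟨t, ht, htz⟩ := hz2
  rw [Finset.mem_filter] at ht
  rw [Finset.mem_add]
  exact ⟨z, hz1.1, t, ht.1, by omega⟩

lemma memS_mid (A B : Finset ℤ) (lA lB : ℤ)
    (hposA : ∀ t ∈ A, (0:ℤ) ≤ t) (hposB : ∀ t ∈ B, (0:ℤ) ≤ t)
    (hlAub : ∀ t ∈ A, t ≤ lA) (hlBub : ∀ t ∈ B, t ≤ lB)
    (hdiam : lA ≤ (A.card:ℤ) + B.card - 3) (h0lA : 0 ≤ lA)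
    (t : ℤ) (h1 : lB ≤ t) (h2 : t ≤ lA) : t ∈ A + B := by
  have hinj : Function.Injective (fun x : ℤ => t - x) := fun x y h => by simpa using h
  set Y := B.image (fun x => t - x) with hY
  have hYcard : (Y.card : ℤ) = B.card := by
    rw [hY, Finset.card_image_of_injective _ hinj]
  have hXW : A ⊆ Finset.Icc 0 lA := fun x hx => Finset.mem_Icc.2 ⟨hposA x hx, hlAub x hx⟩
  have hYW : Y ⊆ Finset.Icc 0 lA := by
    intro z hz; rw [hY, Finset.mem_image] at hz
    obtain ⟨x, hx, rfl⟩ := hz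
    have := hposB x hx; have := hlBub x hx
    exact Finset.mem_Icc.2 ⟨by omega, by omega⟩
  have hcard : ((Finset.Icc (0:ℤ) lA).card : ℤ) < A.card + Y.card := by
    rw [card_Icc_int 0 lA (by omega), hYcard]; omega
  obtain ⟨z, hz⟩ := pigeon A Y _ hXW hYW hcard
  rw [Finset.mem_inter] at hz
  obtain ⟨hz1, hz2⟩ := hz
  rw [hY, Finset.mem_image] at hz2
  obtain ⟨x, hx, hxz⟩ := hz2
  rw [Finset.mem_add]
  exact ⟨z, hz1, x, hx, by omega⟩

lemma lemmaM (A B : Finset ℤ) (lA lB : ℤ)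
    (hposA : ∀ t ∈ A, (0:ℤ) ≤ t) (hposB : ∀ t ∈ B, (0:ℤ) ≤ t)
    (hlAub : ∀ t ∈ A, t ≤ lA) (hlBub : ∀ t ∈ B, t ≤ lB)
    (hBA : lB ≤ lA) (hdiam : lA ≤ (A.card:ℤ) + B.card - 3)
    (c : ℤ) (h0c : 0 ≤ c) (hclB : c ≤ lB)
    (h1 : c ∉ A + B) (h2 : c + lA ∉ A + B) : False := by
  classical
  set B₁ := B.filter (fun t => t ≤ c) with hB₁
  set B₂ := B.filter (fun t => ¬ t ≤ c) with hB₂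
  have hinj1 : Function.Injective (fun t : ℤ => c - t) := fun x y h => by simpa using h
  have hinj2 : Function.Injective (fun t : ℤ => c + lA - t) := fun x y h => by simpa using h
  set X₁ := B₁.image (fun t => c - t) with hX₁
  set X₂ := B₂.image (fun t => c + lA - t) with hX₂
  set H := (Finset.Icc 0 lA) \ A with hH
  have hX₁H : X₁ ⊆ H := by
    intro z hz; rw [hX₁, Finset.mem_image] at hz
    obtain ⟨t, ht, rfl⟩ := hz
    rw [hB₁, Finset.mem_filter] at ht
    have h0t := hposB t ht.1
    rw [hH, Finset.mem_sdiff]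
    refine ⟨Finset.mem_Icc.2 ⟨by omega, by omega⟩, ?_⟩
    intro hmem
    exact h1 (Finset.mem_add.2 ⟨c - t, hmem, t, ht.1, by ring⟩)
  have hX₂H : X₂ ⊆ H := by
    intro z hz; rw [hX₂, Finset.mem_image] at hz
    obtain ⟨t, ht, rfl⟩ := hz
    rw [hB₂, Finset.mem_filter] at ht
    have hlt := hlBub t ht.1
    rw [hH, Finset.mem_sdiff]
    refine ⟨Finset.mem_Icc.2 ⟨by omega, by have := ht.2; omega⟩, ?_⟩
    intro hmem
    exact h2 (Finset.mem_add.2 ⟨c + lA - t, hmem, t, ht.1, by ring⟩)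
  have hX₁c : (X₁.card : ℤ) = B₁.card := by
    rw [hX₁, Finset.card_image_of_injective _ hinj1]
  have hX₂c : (X₂.card : ℤ) = B₂.card := by
    rw [hX₂, Finset.card_image_of_injective _ hinj2]
  have hsplit : (B₁.card : ℤ) + B₂.card = B.card := by
    have := Finset.card_filter_add_card_filter_not (s := B) (p := fun t => t ≤ c)
    exact_mod_cast this
  have hinter : X₁ ∩ X₂ ⊆ {c} := by
    intro z hz
    rw [Finset.mem_inter] at hz
    obtain ⟨hz1, hz2⟩ := hz
    rw [hX₁, Finset.mem_image] at hz1
    rw [hX₂, Finset.mem_image] at hz2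
    obtain ⟨t1, ht1, hzt1⟩ := hz1
    obtain ⟨t2, ht2, hzt2⟩ := hz2
    rw [hB₁, Finset.mem_filter] at ht1
    rw [hB₂, Finset.mem_filter] at ht2
    have := hlBub t2 ht2.1
    have := hposB t1 ht1.1
    simp only [Finset.mem_singleton]
    omega
  have hintercard : ((X₁ ∩ X₂).card : ℤ) ≤ 1 := by
    have := Finset.card_le_card hinter
    simp only [Finset.card_singleton] at this
    exact_mod_cast this
  have hHcard : (H.card : ℤ) = lA + 1 - A.card := by
    rw [hH, Finset.card_sdiff_of_subset (fun x hx => Finset.mem_Icc.2 ⟨hposA x hx, hlAub x hx⟩)]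
    have hAle : A.card ≤ (Finset.Icc (0:ℤ) lA).card :=
      Finset.card_le_card (fun x hx => Finset.mem_Icc.2 ⟨hposA x hx, hlAub x hx⟩)
    have : ((Finset.Icc (0:ℤ) lA).card : ℤ) = lA + 1 := by
      rw [card_Icc_int 0 lA (by omega)]; ring
    push_cast [Nat.cast_sub hAle]
    omega
  have hunion : ((X₁ ∪ X₂).card : ℤ) ≤ H.card :=
    by exact_mod_cast Finset.card_le_card (Finset.union_subset hX₁H hX₂H)
  have hcui := Finset.card_union_add_card_inter X₁ X₂
  have hcui' : ((X₁ ∪ X₂).card : ℤ) + ((X₁ ∩ X₂).card : ℤ) = (X₁.card : ℤ) + X₂.card := by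
    exact_mod_cast hcui
  omega

noncomputable def exc (A B : Finset ℤ) (x : ℤ) : ℤ := pre A x + pre B x - (x+1)

lemma pre_add_suf' (X : Finset ℤ) (x : ℤ) : pre X (x-1) + suf X x = X.card := by
  have := pre_add_suf X (x-1)
  rwa [show x - 1 + 1 = x by ring] at this

lemma exc_step (A B : Finset ℤ) (x : ℤ) :
    exc A B x = exc A B (x-1) + ((if x ∈ A then 1 else 0) + (if x ∈ B then 1 else 0) - 1) := by
  unfold exc
  rw [pre_step A x, pre_step B x]
  ring

lemma exc_step_le (A B : Finset ℤ) (x : ℤ) : exc A B x ≤ exc A B (x-1) + 1 := by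
  have h := exc_step A B x; split_ifs at h <;> omega

lemma exc_step_ge (A B : Finset ℤ) (x : ℤ) : exc A B (x-1) - 1 ≤ exc A B x := by
  have h := exc_step A B x; split_ifs at h <;> omega

lemma descent (A B : Finset ℤ) (k x0 x1 : ℤ) (hk : 1 ≤ k) (hx : x0 ≤ x1)
    (hanch2 : k + 1 ≤ exc A B x0) (hanch1 : exc A B x1 ≤ 0) :
    k ≤ (((Finset.Icc (x0+1) x1).filter
        (fun h => h ∉ A ∧ h ∉ B ∧ 1 ≤ exc A B h ∧ exc A B h ≤ k)).card : ℤ) := by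
  classical
  set GD := (Finset.Icc (x0+1) x1).filter
      (fun h => h ∉ A ∧ h ∉ B ∧ 1 ≤ exc A B h ∧ exc A B h ≤ k) with hGD
  have hsub : Finset.Icc (1:ℤ) k ⊆ GD.image (exc A B) := by
    intro i hi
    rw [Finset.mem_Icc] at hi
    have hTne : ((Finset.Icc x0 x1).filter (fun y => exc A B y ≤ i)).Nonempty := by
      refine ⟨x1, ?_⟩
      rw [Finset.mem_filter, Finset.mem_Icc]
      exact ⟨⟨hx, le_refl _⟩, by omega⟩
    set h0 := ((Finset.Icc x0 x1).filter (fun y => exc A B y ≤ i)).min' hTne with hh0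
    have hh0mem : h0 ∈ (Finset.Icc x0 x1).filter (fun y => exc A B y ≤ i) :=
      Finset.min'_mem _ hTne
    rw [Finset.mem_filter, Finset.mem_Icc] at hh0mem
    have hh0F : exc A B h0 ≤ i := hh0mem.2
    have hh0lo : x0 ≤ h0 := hh0mem.1.1
    have hh0hi : h0 ≤ x1 := hh0mem.1.2
    have hh0ne : h0 ≠ x0 := by
      intro hcc
      rw [hcc] at hh0F
      omega
    have hprev : i + 1 ≤ exc A B (h0 - 1) := by
      by_contra hcc
      push_neg at hcc
      have hmem : h0 - 1 ∈ (Finset.Icc x0 x1).filter (fun y => exc A B y ≤ i) := by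
        rw [Finset.mem_filter, Finset.mem_Icc]
        exact ⟨⟨by omega, by omega⟩, by omega⟩
      have := Finset.min'_le _ _ hmem
      omega
    have hstep := exc_step A B h0
    have hFh0 : exc A B h0 = i := by
      have := exc_step_ge A B h0
      omega
    have hdown : h0 ∉ A ∧ h0 ∉ B := by
      constructor
      · intro hA'
        rw [if_pos hA'] at hstep
        by_cases hB' : h0 ∈ B
        · rw [if_pos hB'] at hstep; omega
        · rw [if_neg hB'] at hstep; omega
      · intro hB'
        rw [if_pos hB'] at hstep
        by_cases hA' : h0 ∈ A
        · rw [if_pos hA'] at hstep; omega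
        · rw [if_neg hA'] at hstep; omega
    rw [Finset.mem_image]
    refine ⟨h0, ?_, hFh0⟩
    rw [hGD, Finset.mem_filter, Finset.mem_Icc]
    exact ⟨⟨by omega, by omega⟩, hdown.1, hdown.2, by omega, by omega⟩
  have h1 : ((Finset.Icc (1:ℤ) k).card : ℤ) ≤ ((GD.image (exc A B)).card : ℤ) := by
    exact_mod_cast Finset.card_le_card hsub
  have h2 : ((GD.image (exc A B)).card : ℤ) ≤ (GD.card : ℤ) := by
    exact_mod_cast Finset.card_image_le
  have h3 : ((Finset.Icc (1:ℤ) k).card : ℤ) = k := by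
    rw [card_Icc_int 1 k (by omega)]; ring
  omega

lemma good_pair (A B : Finset ℤ) (lA lB : ℤ)
    (hposA : ∀ t ∈ A, (0:ℤ) ≤ t) (hposB : ∀ t ∈ B, (0:ℤ) ≤ t)
    (hlAub : ∀ t ∈ A, t ≤ lA) (hlBub : ∀ t ∈ B, t ≤ lB) (hBA : lB ≤ lA)
    (h : ℤ) (hh0 : 0 ≤ h) (hhlB : h ≤ lB) (hA' : h ∉ A) (hB' : h ∉ B)
    (h1 : 1 ≤ exc A B h)
    (h2 : exc A B h ≤ (A.card:ℤ) + B.card - 3 - lA + (if lB < lA then 1 else 0)) :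
    h ∈ A + B ∧ h + lA ∈ A + B := by
  have hexc : exc A B h = pre A h + pre B h - (h+1) := rfl
  constructor
  · exact memS_lower A B hposA hposB h hh0 (by omega)
  · refine memS_upper A B lA lB hlAub hlBub h hhlB ?_
    have eA : pre A (h-1) + suf A h = (A.card:ℤ) := pre_add_suf' A h
    have eB : pre B (h-1) + suf B h = (B.card:ℤ) := pre_add_suf' B h
    have eA2 : pre A h = pre A (h-1) := by
      rw [pre_step A h, if_neg hA']; ring
    have eB2 : pre B h = pre B (h-1) := by
      rw [pre_step B h, if_neg hB']; ring
    by_cases hgg : lB < lA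
    · have e3 : suf A (h+1) ≤ ((h + (lA - lB)) - (h+1)) + suf A (h + (lA - lB)) :=
        suf_split A (by omega)
      have e4 : suf A (h+1) = suf A h - (if h ∈ A then 1 else 0) := by
        have p1 := pre_add_suf A h
        have p2 := pre_add_suf' A h
        rw [pre_step A h] at p1
        omega
      rw [if_neg hA'] at e4
      rw [if_pos hgg] at h2
      omega
    · have hll : lA = lB := by omega
      have e5 : h + (lA - lB) = h := by omega
      rw [e5]
      have e4 : suf A h = (A.card:ℤ) - pre A h := by omega
      rw [if_neg hgg] at h2
      omega

lemma count_S (A B : Finset ℤ) (lA lB : ℤ)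
    (hposA : ∀ t ∈ A, (0:ℤ) ≤ t) (hposB : ∀ t ∈ B, (0:ℤ) ≤ t)
    (hlAub : ∀ t ∈ A, t ≤ lA) (hlBub : ∀ t ∈ B, t ≤ lB)
    (hBA : lB ≤ lA) (hdiam : lA ≤ (A.card:ℤ) + B.card - 3) (h0lA : 0 ≤ lA) (h0lB : 0 ≤ lB) :
    lA + ((((Finset.Icc (0:ℤ) lB).filter
        (fun c => c ∈ A + B ∧ c + lA ∈ A + B)).card : ℤ)) ≤ ((A+B).card : ℤ) := by
  classical
  have hSpos : ∀ t ∈ A + B, 0 ≤ t := by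
    intro t ht
    rw [Finset.mem_add] at ht
    obtain ⟨y, hy, z, hz, rfl⟩ := ht
    have := hposA y hy; have := hposB z hz; omega
  have hSub : ∀ t ∈ A + B, t ≤ lA + lB := by
    intro t ht
    rw [Finset.mem_add] at ht
    obtain ⟨y, hy, z, hz, rfl⟩ := ht
    have := hlAub y hy; have := hlBub z hz; omega
  set S := A + B with hS
  set G := (Finset.Icc (0:ℤ) lB).filter (fun c => c ∈ S ∧ c + lA ∈ S) with hG
  set S₀ := S.filter (fun t => t ≤ lB) with hS₀
  set St := S.filter (fun t => lA ≤ t) with hSt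
  set T := St.image (fun t => t - lA) with hT
  have hTcard : (T.card : ℤ) = St.card := by
    rw [hT, Finset.card_image_of_injective _ (fun x y h => by simpa using h)]
  have hS0sub : S₀ ⊆ Finset.Icc 0 lB := by
    intro t ht
    rw [hS₀, Finset.mem_filter] at ht
    exact Finset.mem_Icc.2 ⟨hSpos t ht.1, ht.2⟩
  have hTsub : T ⊆ Finset.Icc 0 lB := by
    intro t ht
    rw [hT, Finset.mem_image] at ht
    obtain ⟨z, hz, rfl⟩ := ht
    rw [hSt, Finset.mem_filter] at hz
    have := hSub z hz.1
    exact Finset.mem_Icc.2 ⟨by omega, by have := hz.2; omega⟩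
  have hcover : Finset.Icc (0:ℤ) lB ⊆ S₀ ∪ T := by
    intro c hc
    rw [Finset.mem_Icc] at hc
    rw [Finset.mem_union]
    by_cases hcS : c ∈ S
    · left; rw [hS₀, Finset.mem_filter]; exact ⟨hcS, hc.2⟩
    · right
      have hclA : c + lA ∈ S := by
        by_contra hcc
        exact lemmaM A B lA lB hposA hposB hlAub hlBub hBA hdiam c hc.1 hc.2 hcS hcc
      rw [hT, Finset.mem_image]
      refine ⟨c + lA, ?_, by ring⟩
      rw [hSt, Finset.mem_filter]
      exact ⟨hclA, by omega⟩
  have hGinter : G ⊆ S₀ ∩ T := by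
    intro c hc
    rw [hG, Finset.mem_filter, Finset.mem_Icc] at hc
    rw [Finset.mem_inter]
    constructor
    · rw [hS₀, Finset.mem_filter]; exact ⟨hc.2.1, hc.1.2⟩
    · rw [hT, Finset.mem_image]
      refine ⟨c + lA, ?_, by ring⟩
      rw [hSt, Finset.mem_filter]
      exact ⟨hc.2.2, by omega⟩
  have c1 : (S₀ ∪ T).card + (S₀ ∩ T).card = S₀.card + T.card :=
    Finset.card_union_add_card_inter S₀ T
  have c2 : lB + 1 ≤ ((S₀ ∪ T).card : ℤ) := by
    have := Finset.card_le_card hcover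
    have hIcc : ((Finset.Icc (0:ℤ) lB).card : ℤ) = lB + 1 := by
      rw [card_Icc_int 0 lB (by omega)]; ring
    calc lB + 1 = ((Finset.Icc (0:ℤ) lB).card : ℤ) := hIcc.symm
      _ ≤ _ := by exact_mod_cast this
  have c3 : (G.card : ℤ) ≤ ((S₀ ∩ T).card : ℤ) := by
    exact_mod_cast Finset.card_le_card hGinter
  have c4 : lB + 1 + (G.card : ℤ) ≤ (S₀.card : ℤ) + St.card := by
    have c1' : ((S₀ ∪ T).card : ℤ) + ((S₀ ∩ T).card : ℤ) = (S₀.card : ℤ) + T.card := by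
      exact_mod_cast c1
    omega
  by_cases hgg : lB < lA
  · set Sm := S.filter (fun t => lB < t ∧ t < lA) with hSm
    have hSmcard : lA - lB - 1 ≤ (Sm.card : ℤ) := by
      have hIoo : Finset.Ioo lB lA ⊆ Sm := by
        intro t ht
        rw [Finset.mem_Ioo] at ht
        rw [hSm, Finset.mem_filter]
        exact ⟨memS_mid A B lA lB hposA hposB hlAub hlBub hdiam h0lA t (by omega) (by omega),
          ht.1, ht.2⟩
      have := Finset.card_le_card hIoo
      have hIooc : ((Finset.Ioo lB lA).card : ℤ) = lA - lB - 1 := by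
        rw [Int.card_Ioo]
        omega
      calc lA - lB - 1 = ((Finset.Ioo lB lA).card : ℤ) := hIooc.symm
        _ ≤ _ := by exact_mod_cast this
    have hd1 : Disjoint S₀ Sm := by
      rw [Finset.disjoint_left]
      intro t ht1 ht2
      rw [hS₀, Finset.mem_filter] at ht1
      rw [hSm, Finset.mem_filter] at ht2
      omega
    have hd2 : Disjoint (S₀ ∪ Sm) St := by
      rw [Finset.disjoint_left]
      intro t ht1 ht2
      rw [Finset.mem_union] at ht1
      rw [hSt, Finset.mem_filter] at ht2
      rcases ht1 with h | h
      · rw [hS₀, Finset.mem_filter] at h; omega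
      · rw [hSm, Finset.mem_filter] at h; omega
    have hsubS : S₀ ∪ Sm ∪ St ⊆ S := by
      intro t ht
      rw [Finset.mem_union] at ht
      rcases ht with h | h
      · rw [Finset.mem_union] at h
        rcases h with h | h
        · exact (Finset.mem_filter.1 h).1
        · exact (Finset.mem_filter.1 h).1
      · exact (Finset.mem_filter.1 h).1
    have e1 : (S₀ ∪ Sm ∪ St).card = (S₀ ∪ Sm).card + St.card :=
      Finset.card_union_of_disjoint hd2
    have e2 : (S₀ ∪ Sm).card = S₀.card + Sm.card :=
      Finset.card_union_of_disjoint hd1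
    have e3 : (S₀ ∪ Sm ∪ St).card ≤ S.card := Finset.card_le_card hsubS
    have e4 : (S₀.card : ℤ) + Sm.card + St.card ≤ (S.card : ℤ) := by
      have : ((S₀ ∪ Sm ∪ St).card : ℤ) = (S₀.card : ℤ) + Sm.card + St.card := by
        rw [e1, e2]; push_cast; ring
      rw [← this]; exact_mod_cast e3
    omega
  · have hll : lA = lB := by omega
    have hd : (S₀ ∩ St) ⊆ {lA} := by
      intro t ht
      rw [Finset.mem_inter] at ht
      obtain ⟨h1, h2⟩ := ht
      rw [hS₀, Finset.mem_filter] at h1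
      rw [hSt, Finset.mem_filter] at h2
      rw [Finset.mem_singleton]
      omega
    have hdc : ((S₀ ∩ St).card : ℤ) ≤ 1 := by
      have := Finset.card_le_card hd
      simp only [Finset.card_singleton] at this
      exact_mod_cast this
    have hsubS : S₀ ∪ St ⊆ S := by
      intro t ht
      rw [Finset.mem_union] at ht
      rcases ht with h | h
      · exact (Finset.mem_filter.1 h).1
      · exact (Finset.mem_filter.1 h).1
    have e1 : (S₀ ∪ St).card + (S₀ ∩ St).card = S₀.card + St.card :=
      Finset.card_union_add_card_inter S₀ St
    have e2 : (S₀ ∪ St).card ≤ S.card := Finset.card_le_card hsubS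
    have e1' : ((S₀ ∪ St).card : ℤ) + ((S₀ ∩ St).card : ℤ) = (S₀.card : ℤ) + St.card := by
      exact_mod_cast e1
    have e2' : ((S₀ ∪ St).card : ℤ) ≤ (S.card : ℤ) := by exact_mod_cast e2
    omega

lemma key (A B : Finset ℤ) (lA lB : ℤ)
    (h0A : (0:ℤ) ∈ A) (h0B : (0:ℤ) ∈ B)
    (hposA : ∀ t ∈ A, (0:ℤ) ≤ t) (hposB : ∀ t ∈ B, (0:ℤ) ≤ t)
    (hlAA : lA ∈ A) (hlAub : ∀ t ∈ A, t ≤ lA)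
    (hlBB : lB ∈ B) (hlBub : ∀ t ∈ B, t ≤ lB)
    (hBA : lB ≤ lA) (hdiam : lA ≤ (A.card:ℤ) + B.card - 3) :
    (∃ w : ℤ, Finset.Icc w (w + ((A.card:ℤ) + B.card - 2)) ⊆ A + B) ∨
      ((A.card:ℤ) + 2*B.card - 2 - (if A ⊆ B then 1 else 0) ≤ ((A+B).card : ℤ)) := by
  classical
  set a : ℤ := (A.card : ℤ) with ha
  set b : ℤ := (B.card : ℤ) with hb
  set S := A + B with hS
  have h0lA : 0 ≤ lA := hposA lA hlAA
  have h0lB : 0 ≤ lB := hposB lB hlBB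
  have halA : a ≤ lA + 1 := by
    rw [ha, ← pre_all A lA hlAub]; exact pre_le A lA hposA (by omega)
  have hblB : b ≤ lB + 1 := by
    rw [hb, ← pre_all B lB hlBub]; exact pre_le B lB hposB (by omega)
  have hmid : ∀ t, lB ≤ t → t ≤ lA → t ∈ S :=
    fun t h1 h2 => memS_mid A B lA lB hposA hposB hlAub hlBub hdiam h0lA t h1 h2
  -- u
  set U := (Finset.Icc (0:ℤ) lB).filter (fun x => ∀ y, x ≤ y → y ≤ lA → y ∈ S) with hU
  have hUne : U.Nonempty := by
    refine ⟨lB, ?_⟩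
    rw [hU, Finset.mem_filter]
    exact ⟨Finset.mem_Icc.2 ⟨h0lB, le_refl _⟩, fun y h1 h2 => hmid y h1 h2⟩
  set u := U.min' hUne with hu
  have hu_mem : u ∈ U := U.min'_mem hUne
  rw [hU, Finset.mem_filter, Finset.mem_Icc] at hu_mem
  have hu0 : 0 ≤ u := hu_mem.1.1
  have hulB : u ≤ lB := hu_mem.1.2
  have hu_sub : ∀ y, u ≤ y → y ≤ lA → y ∈ S := hu_mem.2
  have hu_hole : 1 ≤ u → (u-1) ∉ S := by
    intro h1 hmem
    have humem : u - 1 ∈ U := by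
      rw [hU, Finset.mem_filter, Finset.mem_Icc]
      refine ⟨⟨by omega, by omega⟩, fun y hy1 hy2 => ?_⟩
      rcases eq_or_lt_of_le hy1 with h | h
      · rwa [← h]
      · exact hu_sub y (by omega) hy2
    have := U.min'_le _ humem
    omega
  -- v
  set V := (Finset.Icc lA (lA+lB)).filter (fun x => ∀ y, lB ≤ y → y ≤ x → y ∈ S) with hV
  have hVne : V.Nonempty := by
    refine ⟨lA, ?_⟩
    rw [hV, Finset.mem_filter]
    exact ⟨Finset.mem_Icc.2 ⟨le_refl _, by omega⟩, fun y h1 h2 => hmid y h1 h2⟩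
  set v := V.max' hVne with hv
  have hv_mem : v ∈ V := V.max'_mem hVne
  rw [hV, Finset.mem_filter, Finset.mem_Icc] at hv_mem
  have hvlA : lA ≤ v := hv_mem.1.1
  have hvL : v ≤ lA + lB := hv_mem.1.2
  have hv_sub : ∀ y, lB ≤ y → y ≤ v → y ∈ S := hv_mem.2
  have hv_hole : v ≤ lA + lB - 1 → (v+1) ∉ S := by
    intro h1 hmem
    have hvmem : v + 1 ∈ V := by
      rw [hV, Finset.mem_filter, Finset.mem_Icc]
      refine ⟨⟨by omega, by omega⟩, fun y hy1 hy2 => ?_⟩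
      rcases eq_or_lt_of_le hy2 with h | h
      · rwa [h]
      · exact hv_sub y hy1 (by omega)
    have := V.le_max' _ hvmem
    omega
  have huv : ∀ y, u ≤ y → y ≤ v → y ∈ S := by
    intro y h1 h2
    by_cases hy : y ≤ lA
    · exact hu_sub y h1 hy
    · exact hv_sub y (by omega) h2
  by_cases hwin : a + b - 1 ≤ v - u + 1
  · left
    refine ⟨u, fun y hy => ?_⟩
    rw [Finset.mem_Icc] at hy
    exact huv y hy.1 (by omega)
  · right
    push_neg at hwin
    -- hole counting lemmas
    have hole_below : ∀ h : ℤ, 0 ≤ h → h ∉ S → pre A h + pre B h ≤ h + 1 := by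
      intro h h0 hmem
      by_contra hc
      push_neg at hc
      exact hmem (memS_lower A B hposA hposB h h0 (by omega))
    have hole_above : ∀ h : ℤ, h ≤ lB → h + lA ∉ S →
        suf A (h + (lA - lB)) + suf B h ≤ lB - h + 1 := by
      intro h hh hmem
      by_contra hc
      push_neg at hc
      exact hmem (memS_upper A B lA lB hlAub hlBub h hh (by omega))
    -- u ≥ 1
    have hu1 : 1 ≤ u := by
      by_contra hc
      have hu00 : u = 0 := by omega
      by_cases hvtop : v ≤ lA + lB - 1
      · have hha := hole_above (v - lA + 1) (by omega) (by
          have : v - lA + 1 + lA = v + 1 := by ring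
          rw [this]; exact hv_hole hvtop)
        have e1 : pre A (v - lB) + suf A (v - lB + 1) = a := pre_add_suf A (v - lB)
        have e2 : pre B (v - lA) + suf B (v - lA + 1) = b := pre_add_suf B (v - lA)
        have e3 : pre A (v - lB) ≤ v - lB + 1 := pre_le A _ hposA (by omega)
        have e4 : pre B (v - lA) ≤ v - lA + 1 := pre_le B _ hposB (by omega)
        have e5 : v - lA + 1 + (lA - lB) = v - lB + 1 := by ring
        rw [e5] at hha
        omega
      · have : v = lA + lB := by omega
        omega
    have hu1' : (u - 1) ∉ S := hu_hole hu1
    have hhb : pre A (u-1) + pre B (u-1) ≤ u := by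
      have := hole_below (u-1) (by omega) hu1'
      omega
    -- v ≤ L - 1
    have hvtop : v ≤ lA + lB - 1 := by
      by_contra hc
      have hvv : v = lA + lB := by omega
      have e1 : pre A (u-1) + suf A u = a := by
        have := pre_add_suf A (u-1); simpa using this
      have e2 : pre B (u-1) + suf B u = b := by
        have := pre_add_suf B (u-1); simpa using this
      have e3 : suf A u ≤ lA - u + 1 := suf_le A u lA hlAub (by omega)
      have e4 : suf B u ≤ lB - u + 1 := suf_le B u lB hlBub (by omega)
      omega
    have hv1' : (v + 1) ∉ S := hv_hole hvtop
    have hha : suf A (v - lA + 1 + (lA - lB)) + suf B (v - lA + 1) ≤ lB - (v - lA + 1) + 1 := by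
      refine hole_above (v - lA + 1) (by omega) ?_
      have : v - lA + 1 + lA = v + 1 := by ring
      rw [this]; exact hv1'
    -- q + 1 ≤ u
    have hqu : v - lA + 1 ≤ u := by
      by_contra hc
      push_neg at hc
      have e1 : pre A (u-1) + suf A u = a := by
        have := pre_add_suf A (u-1); simpa using this
      have e2 : pre B (u-1) + suf B u = b := by
        have := pre_add_suf B (u-1); simpa using this
      have e3 : suf A u ≤ (v - lA + 1 + (lA - lB)) - u + suf A (v - lA + 1 + (lA - lB)) :=
        suf_split A (by omega)
      have e4 : suf B u ≤ (v - lA + 1) - u + suf B (v - lA + 1) := suf_split B (by omega)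
      omega
    -- Case 2 proper
    obtain ⟨k, hkdef⟩ : ∃ k:ℤ, k = a + b - 3 - lA + (if lB < lA then 1 else 0) := ⟨_, rfl⟩
    have hk0 : 0 ≤ k := by rw [hkdef]; split_ifs <;> omega
    have hkub : k ≤ a + b - 2 - lA := by rw [hkdef]; split_ifs <;> omega
    have anchor1 : exc A B (u-1) ≤ 0 := by
      have hex : exc A B (u-1) = pre A (u-1) + pre B (u-1) - (u-1+1) := rfl
      omega
    have anchor2 : k + 1 ≤ exc A B (v - lA + 1) := by
      have hex : exc A B (v - lA + 1) = pre A (v - lA + 1) + pre B (v - lA + 1)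
          - (v - lA + 1 + 1) := rfl
      have e1 : pre A (v - lA + 1) + suf A (v - lA + 1 + 1) = a := pre_add_suf A (v - lA + 1)
      have e2 : pre B (v - lA + 1) + suf B (v - lA + 1 + 1) = b := pre_add_suf B (v - lA + 1)
      have e4 : suf B (v - lA + 1 + 1) ≤ suf B (v - lA + 1) := suf_anti B (by omega)
      by_cases hgg : lB < lA
      · have e3 : suf A (v - lA + 1 + 1) ≤
            ((v - lA + 1 + (lA - lB)) - (v - lA + 1 + 1)) + suf A (v - lA + 1 + (lA - lB)) :=
          suf_split A (by omega)
        rw [if_pos hgg] at hkdef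
        omega
      · have e5 : v - lA + 1 + (lA - lB) = v - lA + 1 := by omega
        rw [e5] at hha
        have e3 : suf A (v - lA + 1 + 1) ≤ suf A (v - lA + 1) := suf_anti A (by omega)
        rw [if_neg hgg] at hkdef
        omega
    have hGDcard : k ≤ ((((Finset.Icc (v - lA + 1 + 1) (u-1)).filter
        (fun h => h ∉ A ∧ h ∉ B ∧ 1 ≤ exc A B h ∧ exc A B h ≤ k)).card : ℤ)) := by
      by_cases hk1 : 1 ≤ k
      · have hx : v - lA + 1 ≤ u - 1 := by
          by_contra hcc
          have huq : v - lA + 1 = u := by omega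
          rw [huq] at anchor2
          have := exc_step_le A B u
          omega
        exact descent A B k (v - lA + 1) (u-1) hk1 hx anchor2 anchor1
      · have : (0:ℤ) ≤ (((Finset.Icc (v - lA + 1 + 1) (u-1)).filter
            (fun h => h ∉ A ∧ h ∉ B ∧ 1 ≤ exc A B h ∧ exc A B h ≤ k)).card : ℤ) :=
          Int.ofNat_nonneg _
        omega
    -- the good set G
    have hGDsubG : ((Finset.Icc (v - lA + 1 + 1) (u-1)).filter
        (fun h => h ∉ A ∧ h ∉ B ∧ 1 ≤ exc A B h ∧ exc A B h ≤ k)) ⊆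
        (Finset.Icc (0:ℤ) lB).filter (fun c => c ∈ S ∧ c + lA ∈ S) := by
      intro h hmem
      rw [Finset.mem_filter, Finset.mem_Icc] at hmem
      obtain ⟨⟨hl, hr⟩, hA', hB', hF1, hF2⟩ := hmem
      have hpair := good_pair A B lA lB hposA hposB hlAub hlBub hBA h
        (by omega) (by omega) hA' hB' hF1 (by rw [← hkdef]; exact hF2)
      rw [Finset.mem_filter, Finset.mem_Icc]
      exact ⟨⟨by omega, by omega⟩, hpair.1, hpair.2⟩
    have hBsubG : B ⊆ (Finset.Icc (0:ℤ) lB).filter (fun c => c ∈ S ∧ c + lA ∈ S) := by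
      intro t ht
      rw [Finset.mem_filter, Finset.mem_Icc]
      refine ⟨⟨hposB t ht, hlBub t ht⟩, ?_, ?_⟩
      · exact Finset.mem_add.2 ⟨0, h0A, t, ht, by ring⟩
      · exact Finset.mem_add.2 ⟨lA, hlAA, t, ht, by ring⟩
    have hdisjBGD : Disjoint ((Finset.Icc (v - lA + 1 + 1) (u-1)).filter
        (fun h => h ∉ A ∧ h ∉ B ∧ 1 ≤ exc A B h ∧ exc A B h ≤ k)) B := by
      rw [Finset.disjoint_left]
      intro t ht1 ht2
      rw [Finset.mem_filter] at ht1
      exact ht1.2.2.1 ht2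
    obtain ⟨d, hd⟩ : ∃ d:ℤ, d = (if A ⊆ B then 1 else 0) := ⟨_, rfl⟩
    have hGcard : b + (a + b - 3 - lA) + 1 - d ≤
        (((Finset.Icc (0:ℤ) lB).filter (fun c => c ∈ S ∧ c + lA ∈ S)).card : ℤ) := by
      have hcup : (((Finset.Icc (v - lA + 1 + 1) (u-1)).filter
          (fun h => h ∉ A ∧ h ∉ B ∧ 1 ≤ exc A B h ∧ exc A B h ≤ k)) ∪ B).card =
          (((Finset.Icc (v - lA + 1 + 1) (u-1)).filter
          (fun h => h ∉ A ∧ h ∉ B ∧ 1 ≤ exc A B h ∧ exc A B h ≤ k)).card) + B.card :=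
        Finset.card_union_of_disjoint hdisjBGD
      by_cases hgg : lB < lA
      · have hnsub : ¬ A ⊆ B := by
          intro hsub
          have := hlBub lA (hsub hlAA)
          omega
        rw [if_neg hnsub] at hd
        rw [if_pos hgg] at hkdef
        have hsubG := Finset.union_subset hGDsubG hBsubG
        have h1 := Finset.card_le_card hsubG
        have h1' : ((((Finset.Icc (v - lA + 1 + 1) (u-1)).filter
            (fun h => h ∉ A ∧ h ∉ B ∧ 1 ≤ exc A B h ∧ exc A B h ≤ k)) ∪ B).card : ℤ) ≤
            (((Finset.Icc (0:ℤ) lB).filter (fun c => c ∈ S ∧ c + lA ∈ S)).card : ℤ) := by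
          exact_mod_cast h1
        have hcup' : ((((Finset.Icc (v - lA + 1 + 1) (u-1)).filter
            (fun h => h ∉ A ∧ h ∉ B ∧ 1 ≤ exc A B h ∧ exc A B h ≤ k)) ∪ B).card : ℤ) =
            ((((Finset.Icc (v - lA + 1 + 1) (u-1)).filter
            (fun h => h ∉ A ∧ h ∉ B ∧ 1 ≤ exc A B h ∧ exc A B h ≤ k)).card : ℤ)) + b := by
          rw [hb]; exact_mod_cast hcup
        omega
      · rw [if_neg hgg] at hkdef
        have hll : lA = lB := by omega
        by_cases hAB : A ⊆ B
        · rw [if_pos hAB] at hd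
          have hsubG := Finset.union_subset hGDsubG hBsubG
          have h1 := Finset.card_le_card hsubG
          have h1' : ((((Finset.Icc (v - lA + 1 + 1) (u-1)).filter
              (fun h => h ∉ A ∧ h ∉ B ∧ 1 ≤ exc A B h ∧ exc A B h ≤ k)) ∪ B).card : ℤ) ≤
              (((Finset.Icc (0:ℤ) lB).filter (fun c => c ∈ S ∧ c + lA ∈ S)).card : ℤ) := by
            exact_mod_cast h1
          have hcup' : ((((Finset.Icc (v - lA + 1 + 1) (u-1)).filter
              (fun h => h ∉ A ∧ h ∉ B ∧ 1 ≤ exc A B h ∧ exc A B h ≤ k)) ∪ B).card : ℤ) =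
              ((((Finset.Icc (v - lA + 1 + 1) (u-1)).filter
              (fun h => h ∉ A ∧ h ∉ B ∧ 1 ≤ exc A B h ∧ exc A B h ≤ k)).card : ℤ)) + b := by
            rw [hb]; exact_mod_cast hcup
          omega
        · rw [if_neg hAB] at hd
          obtain ⟨w, hwA, hwB⟩ := Finset.not_subset.1 hAB
          have hwG : w ∈ (Finset.Icc (0:ℤ) lB).filter (fun c => c ∈ S ∧ c + lA ∈ S) := by
            rw [Finset.mem_filter, Finset.mem_Icc]
            refine ⟨⟨hposA w hwA, by have := hlAub w hwA; omega⟩, ?_, ?_⟩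
            · exact Finset.mem_add.2 ⟨w, hwA, 0, h0B, by ring⟩
            · exact Finset.mem_add.2 ⟨w, hwA, lB, hlBB, by omega⟩
          have hwnot : w ∉ (((Finset.Icc (v - lA + 1 + 1) (u-1)).filter
              (fun h => h ∉ A ∧ h ∉ B ∧ 1 ≤ exc A B h ∧ exc A B h ≤ k)) ∪ B) := by
            rw [Finset.mem_union]
            rintro (h | h)
            · rw [Finset.mem_filter] at h
              exact h.2.1 hwA
            · exact hwB h
          have hins : insert w (((Finset.Icc (v - lA + 1 + 1) (u-1)).filter
              (fun h => h ∉ A ∧ h ∉ B ∧ 1 ≤ exc A B h ∧ exc A B h ≤ k)) ∪ B) ⊆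
              (Finset.Icc (0:ℤ) lB).filter (fun c => c ∈ S ∧ c + lA ∈ S) := by
            rw [Finset.insert_subset_iff]
            exact ⟨hwG, Finset.union_subset hGDsubG hBsubG⟩
          have h1 := Finset.card_le_card hins
          rw [Finset.card_insert_of_notMem hwnot, hcup] at h1
          have h1' : ((((Finset.Icc (v - lA + 1 + 1) (u-1)).filter
              (fun h => h ∉ A ∧ h ∉ B ∧ 1 ≤ exc A B h ∧ exc A B h ≤ k)).card : ℤ)) + b + 1 ≤
              (((Finset.Icc (0:ℤ) lB).filter (fun c => c ∈ S ∧ c + lA ∈ S)).card : ℤ) := by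
            rw [hb]; exact_mod_cast h1
          omega
    have hfinal := count_S A B lA lB hposA hposB hlAub hlBub hBA hdiam h0lA h0lB
    rw [← hS] at hfinal
    rw [← hd]
    omega

theorem stmt11 (A B : Finset ℤ) (hA : A.Nonempty) (hB : B.Nonempty)
    (hdiam1 : B.max' hB - B.min' hB ≤ A.max' hA - A.min' hA)
    (hdiam2 : A.max' hA - A.min' hA ≤ (A.card : ℤ) + (B.card : ℤ) - 3)
    (hcard : ((A + B).card : ℤ) ≤ (A.card : ℤ) + 2 * (B.card : ℤ) - 3
      - (if ∃ x : ℤ, ∀ a ∈ A, x + a ∈ B then 1 else 0)) :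
    ∃ a : ℤ, Finset.Icc a (a + (A.card : ℤ) + (B.card : ℤ) - 2) ⊆ A + B := by
  classical
  set mA := A.min' hA with hmA
  set MA := A.max' hA with hMA
  set mB := B.min' hB with hmB
  set MB := B.max' hB with hMB
  set A' := A.image (fun t => t - mA) with hA'
  set B' := B.image (fun t => t - mB) with hB'
  have hinjA : Function.Injective (fun t : ℤ => t - mA) := fun x y h => by simpa using h
  have hinjB : Function.Injective (fun t : ℤ => t - mB) := fun x y h => by simpa using h
  have hA'card : A'.card = A.card := Finset.card_image_of_injective _ hinjA
  have hB'card : B'.card = B.card := Finset.card_image_of_injective _ hinjB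
  have h0A' : (0:ℤ) ∈ A' := by
    rw [hA', Finset.mem_image]
    exact ⟨mA, A.min'_mem hA, by ring⟩
  have h0B' : (0:ℤ) ∈ B' := by
    rw [hB', Finset.mem_image]
    exact ⟨mB, B.min'_mem hB, by ring⟩
  have hposA' : ∀ t ∈ A', (0:ℤ) ≤ t := by
    intro t ht
    rw [hA', Finset.mem_image] at ht
    obtain ⟨x, hx, rfl⟩ := ht
    have := A.min'_le x hx
    omega
  have hposB' : ∀ t ∈ B', (0:ℤ) ≤ t := by
    intro t ht
    rw [hB', Finset.mem_image] at ht
    obtain ⟨x, hx, rfl⟩ := ht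
    have := B.min'_le x hx
    omega
  have hlA'A : MA - mA ∈ A' := by
    rw [hA', Finset.mem_image]
    exact ⟨MA, A.max'_mem hA, rfl⟩
  have hlB'B : MB - mB ∈ B' := by
    rw [hB', Finset.mem_image]
    exact ⟨MB, B.max'_mem hB, rfl⟩
  have hlA'ub : ∀ t ∈ A', t ≤ MA - mA := by
    intro t ht
    rw [hA', Finset.mem_image] at ht
    obtain ⟨x, hx, rfl⟩ := ht
    have := A.le_max' x hx
    omega
  have hlB'ub : ∀ t ∈ B', t ≤ MB - mB := by
    intro t ht
    rw [hB', Finset.mem_image] at ht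
    obtain ⟨x, hx, rfl⟩ := ht
    have := B.le_max' x hx
    omega
  have hsum : A' + B' = (A + B).image (fun t => t - (mA + mB)) := by
    ext z
    rw [Finset.mem_add, Finset.mem_image]
    constructor
    · rintro ⟨y, hy, w, hw, rfl⟩
      rw [hA', Finset.mem_image] at hy
      rw [hB', Finset.mem_image] at hw
      obtain ⟨p, hp, rfl⟩ := hy
      obtain ⟨q, hq, rfl⟩ := hw
      exact ⟨p + q, Finset.mem_add.2 ⟨p, hp, q, hq, rfl⟩, by ring⟩
    · rintro ⟨t, ht, rfl⟩
      rw [Finset.mem_add] at ht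
      obtain ⟨p, hp, q, hq, rfl⟩ := ht
      refine ⟨p - mA, ?_, q - mB, ?_, by ring⟩
      · rw [hA', Finset.mem_image]; exact ⟨p, hp, rfl⟩
      · rw [hB', Finset.mem_image]; exact ⟨q, hq, rfl⟩
  have hsumcard : (A' + B').card = (A + B).card := by
    rw [hsum]
    exact Finset.card_image_of_injective _ (fun x y h => by simpa using h)
  have hkey := key A' B' (MA - mA) (MB - mB) h0A' h0B' hposA' hposB'
    hlA'A hlA'ub hlB'B hlB'ub hdiam1
    (by rw [hA'card, hB'card]; exact hdiam2)
  rcases hkey with ⟨w, hw⟩ | hbig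
  · refine ⟨w + (mA + mB), ?_⟩
    intro y hy
    rw [Finset.mem_Icc] at hy
    have hy' : y - (mA + mB) ∈ Finset.Icc w (w + ((A'.card:ℤ) + B'.card - 2)) := by
      rw [Finset.mem_Icc, hA'card, hB'card]
      omega
    have := hw hy'
    rw [hsum, Finset.mem_image] at this
    obtain ⟨t, ht, hteq⟩ := this
    have : t = y := by omega
    rwa [← this]
  · exfalso
    rw [hA'card, hB'card, hsumcard] at hbig
    by_cases hAB : A' ⊆ B'
    · have hδ : ∃ x : ℤ, ∀ a ∈ A, x + a ∈ B := by
        refine ⟨mB - mA, fun t ht => ?_⟩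
        have htA' : t - mA ∈ A' := by
          rw [hA', Finset.mem_image]; exact ⟨t, ht, rfl⟩
        have := hAB htA'
        rw [hB', Finset.mem_image] at this
        obtain ⟨q, hq, hqe⟩ := this
        have : mB - mA + t = q := by omega
        rwa [this]
      rw [if_pos hAB] at hbig
      rw [if_pos hδ] at hcard
      omega
    · rw [if_neg hAB] at hbig
      have : (0:ℤ) ≤ (if ∃ x : ℤ, ∀ a ∈ A, x + a ∈ B then 1 else 0) := by
        split_ifs <;> omega
      omega
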